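/- Let G be a finite group, H a π-Hall subgroup of G, and A a normal subgroup with G = HA and H ∩ A pronormal in A. Then N_G(H ∩ A) is π-separable. -/

import Mathlib

open Pointwise

/-- `n` is a π-number: every prime dividing `n` lies in `π`. -/
def IsPiNumber (π : Set ℕ) (n : ℕ) : Prop := ∀ p : ℕ, p.Prime → p ∣ n → p ∈ π

/-- `H` is a π-Hall subgroup of `G`. -/
def IsHall (π : Set ℕ) {G : Type*} [Group G] (H : Subgroup G) : Prop :=
  IsPiNumber π (Nat.card H) ∧ ∀ p : ℕ, p.Prime → p ∣ H.index → p ∉ π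

/-- `H` is pronormal in `G`: for every `g`, `H` and `H^g = g⁻¹Hg` are conjugate in `⟨H, H^g⟩`. -/
def Pronormal {G : Type*} [Group G] (H : Subgroup G) : Prop :=
  ∀ g : G, ∃ x ∈ H ⊔ MulAut.conj g⁻¹ • H,
    MulAut.conj x⁻¹ • H = MulAut.conj g⁻¹ • H

/-- `H` is strongly pronormal in `G`. -/
def StronglyPronormal {G : Type*} [Group G] (H : Subgroup G) : Prop :=
  ∀ K : Subgroup G, K ≤ H → ∀ g : G, ∃ x ∈ H ⊔ MulAut.conj g⁻¹ • K,
    MulAut.conj x⁻¹ • (MulAut.conj g⁻¹ • K) ≤ H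

/-- `G` is π-separable. -/
def IsPiSeparable (π : Set ℕ) (G : Type*) [Group G] : Prop :=
  ∃ (n : ℕ) (c : Fin (n + 1) → Subgroup G),
    c 0 = ⊥ ∧ c (Fin.last n) = ⊤ ∧ Monotone c ∧ (∀ i, (c i).Normal) ∧
    ∀ i : Fin n,
      IsPiNumber π (Nat.card (↥(c i.succ) ⧸ (c i.castSucc).subgroupOf (c i.succ))) ∨
      IsPiNumber πᶜ (Nat.card (↥(c i.succ) ⧸ (c i.castSucc).subgroupOf (c i.succ)))

/-- `G` satisfies `C_π`. -/
def SatisfiesC (π : Set ℕ) (G : Type*) [Group G] : Prop :=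
  (∃ H : Subgroup G, IsHall π H) ∧
    ∀ H K : Subgroup G, IsHall π H → IsHall π K → ∃ g : G, MulAut.conj g • H = K

theorem stmt8 (π : Set ℕ) (G : Type*) [Group G] [Finite G]
    (H A : Subgroup G) (hH : IsHall π H) (hA : A.Normal)
    (hHA : H ⊔ A = ⊤) (hprn : Pronormal ((H ⊓ A).subgroupOf A)) :
    IsPiSeparable π (Subgroup.normalizer ((H ⊓ A : Subgroup G) : Set G)) := by
  clear hprn
  set K := H ⊓ A with hK
  set N := Subgroup.normalizer (K : Set G) with hN
  -- H ≤ N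
  have hHN : H ≤ N := by
    intro h hh
    rw [Subgroup.mem_normalizer_iff]
    intro n
    simp only [hK, Subgroup.mem_inf]
    constructor
    · rintro ⟨h1, h2⟩
      exact ⟨H.mul_mem (H.mul_mem hh h1) (H.inv_mem hh), hA.conj_mem n h2 h⟩
    · rintro ⟨h1, h2⟩
      have hn : n = h⁻¹ * (h * n * h⁻¹) * h⁻¹⁻¹ := by group
      rw [hn]
      exact ⟨by simpa using H.mul_mem (H.mul_mem (H.inv_mem hh) h1) hh,
        hA.conj_mem _ h2 h⁻¹⟩
  have hKA : K ≤ A := inf_le_right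
  have hKN : K ≤ N := Subgroup.le_normalizer
  have hNA : N ⊔ A = ⊤ := top_le_iff.mp (hHA ▸ sup_le_sup_right hHN A)
  have hAidx : A.relIndex H = A.index := by
    rw [← Subgroup.relIndex_sup_right H A, hHA, Subgroup.relIndex_top_right]
  have hAN : A.relIndex N = A.index := by
    rw [← Subgroup.relIndex_sup_right N A, hNA, Subgroup.relIndex_top_right]
  -- K.relIndex A = H.index
  have hrel : K.relIndex A = H.index := by
    have e1 : K.relIndex A * A.index = K.index := Subgroup.relIndex_mul_index hKA
    have e2 : K.relIndex H * H.index = K.index :=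
      Subgroup.relIndex_mul_index (inf_le_left : K ≤ H)
    have e3 : K.relIndex H = A.index := by
      rw [hK, Subgroup.inf_relIndex_left, hAidx]
    have hA0 : A.index ≠ 0 := Subgroup.index_ne_zero_of_finite
    have e4 : K.relIndex A * A.index = H.index * A.index := by
      rw [e1, ← e2, e3]; ring
    exact Nat.eq_of_mul_eq_mul_right (Nat.pos_of_ne_zero hA0) e4
  refine ⟨3, ![⊥, K.subgroupOf N, A.subgroupOf N, ⊤], rfl, rfl, ?_, ?_, ?_⟩
  · rw [Fin.monotone_iff_le_succ]
    intro i
    fin_cases i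
    · simp
    · simp only [Fin.mk_one, Fin.isValue, Matrix.cons_val_one, Matrix.head_cons]
      show K.subgroupOf N ≤ A.subgroupOf N
      exact fun x hx => hKA hx
    · simp
  · intro i
    fin_cases i
    · show (⊥ : Subgroup ↥N).Normal
      infer_instance
    · exact Subgroup.normal_in_normalizer
    · exact hA.subgroupOf N
    · show (⊤ : Subgroup ↥N).Normal
      infer_instance
  · intro i
    have hcard : ∀ (X Y : Subgroup ↥N),
        Nat.card (↥Y ⧸ X.subgroupOf Y) = X.relIndex Y := fun X Y =>
      (Subgroup.index_eq_card (X.subgroupOf Y)).symm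
    fin_cases i
    · -- factor K : pi-number
      left
      show IsPiNumber π (Nat.card (↥(K.subgroupOf N) ⧸
        (⊥ : Subgroup ↥N).subgroupOf (K.subgroupOf N)))
      intro p hp hdvd
      apply hH.1 p hp
      rw [hcard, Subgroup.relIndex_bot_left] at hdvd
      have hc : Nat.card (K.subgroupOf N) = Nat.card K :=
        Nat.card_congr (Subgroup.subgroupOfEquivOfLe hKN).toEquiv
      rw [hc] at hdvd
      exact hdvd.trans (Subgroup.card_dvd_of_le (inf_le_left : K ≤ H))
    · -- middle factor : pi'-number
      right
      show IsPiNumber πᶜ (Nat.card (↥(A.subgroupOf N) ⧸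
        (K.subgroupOf N).subgroupOf (A.subgroupOf N)))
      intro p hp hdvd
      apply hH.2 p hp
      rw [hcard, ← Subgroup.inf_subgroupOf_right A N,
        Subgroup.relIndex_subgroupOf (inf_le_right : A ⊓ N ≤ N)] at hdvd
      have hKAN : K ≤ A ⊓ N := le_inf hKA hKN
      have hdvd2 : K.relIndex (A ⊓ N) ∣ K.relIndex A :=
        ⟨(A ⊓ N).relIndex A,
          (Subgroup.relIndex_mul_relIndex K (A ⊓ N) A hKAN inf_le_left).symm⟩
      rw [hrel] at hdvd2
      exact hdvd.trans hdvd2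
    · -- top factor : pi-number
      left
      show IsPiNumber π (Nat.card ((⊤ : Subgroup ↥N) ⧸
        (A.subgroupOf N).subgroupOf (⊤ : Subgroup ↥N)))
      intro p hp hdvd
      apply hH.1 p hp
      rw [hcard, Subgroup.relIndex_top_right] at hdvd
      have hid : (A.subgroupOf N).index = A.relIndex N := rfl
      rw [hid, hAN, ← hAidx] at hdvd
      exact hdvd.trans (Subgroup.index_dvd_card (A.subgroupOf H))
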